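/- If a sequence of n elementary moves of the 15-puzzle starts and ends with the blank in the same cell, then the resulting tile permutation, being a product of n transpositions with n even, is an even permutation; consequently any odd permutation of the tiles (with blank fixed) is unreachable. -/
import Mathlib


/-- Two cells of the 4×4 grid are adjacent: differ by one in exactly one coordinate. -/
def Adj (b b' : Fin 4 × Fin 4) : Prop :=
  (b.1 = b'.1 ∧ (b.2.val = b'.2.val + 1 ∨ b'.2.val = b.2.val + 1)) ∨
  (b.2 = b'.2 ∧ (b.1.val = b'.1.val + 1 ∨ b'.1.val = b.1.val + 1))

/-- Linear index of a cell in `Fin 16`. -/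
def pos (b : Fin 4 × Fin 4) : Fin 16 :=
  ⟨b.1.val * 4 + b.2.val, by have := b.1.isLt; have := b.2.isLt; omega⟩

/-- One elementary move: the blank swaps with an adjacent tile. -/
def Move (s t : Equiv.Perm (Fin 16) × (Fin 4 × Fin 4)) : Prop :=
  Adj s.2 t.2 ∧ t.1 = Equiv.swap (pos s.2) (pos t.2) * s.1

/-- Reachability: reflexive-transitive closure of elementary moves. -/
def Reachable : (Equiv.Perm (Fin 16) × (Fin 4 × Fin 4)) →
    (Equiv.Perm (Fin 16) × (Fin 4 × Fin 4)) → Prop :=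
  Relation.ReflTransGen Move

lemma adj_parity {b b' : Fin 4 × Fin 4} (h : Adj b b') :
    (b.1.val + b.2.val + 1) % 2 = (b'.1.val + b'.2.val) % 2 := by
  rcases h with ⟨he, h⟩ | ⟨he, h⟩ <;> rw [Fin.ext_iff] at he <;> omega

lemma adj_pos_ne {b b' : Fin 4 × Fin 4} (h : Adj b b') : pos b ≠ pos b' := by
  simp only [pos, ne_eq, Fin.mk.injEq]
  have h1 := b.1.isLt; have h2 := b.2.isLt
  have h3 := b'.1.isLt; have h4 := b'.2.isLt
  rcases h with ⟨he, hh⟩ | ⟨he, hh⟩ <;> rw [Fin.ext_iff] at he <;> omega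

/-- A sequence of n moves starting at the solved state and returning the blank to its cell
has n even and yields an even tile permutation; hence odd permutations are unreachable. -/
theorem blank_fixed_even_perm (n : ℕ)
    (f : Fin (n + 1) → Equiv.Perm (Fin 16) × (Fin 4 × Fin 4)) (b : Fin 4 × Fin 4)
    (h0 : f 0 = (1, b)) (hstep : ∀ i : Fin n, Move (f i.castSucc) (f i.succ))
    (hret : (f (Fin.last n)).2 = b) :
    Even n ∧ Equiv.Perm.sign (f (Fin.last n)).1 = 1 := by
  have key : ∀ i : ℕ, ∀ h : i ≤ n,
      ((f ⟨i, Nat.lt_succ_of_le h⟩).2.1.val + (f ⟨i, Nat.lt_succ_of_le h⟩).2.2.val + i) % 2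
        = (b.1.val + b.2.val) % 2 ∧
      Equiv.Perm.sign (f ⟨i, Nat.lt_succ_of_le h⟩).1 = (-1 : ℤˣ) ^ i := by
    intro i
    induction i with
    | zero =>
      intro h
      have : (⟨0, Nat.lt_succ_of_le h⟩ : Fin (n + 1)) = 0 := rfl
      rw [this, h0]
      simp
    | succ i ih =>
      intro h
      have hi : i ≤ n := Nat.le_of_succ_le h
      obtain ⟨ih1, ih2⟩ := ih hi
      have hin : i < n := h
      have hmove := hstep ⟨i, hin⟩
      have hc : (⟨i, hin⟩ : Fin n).castSucc = ⟨i, Nat.lt_succ_of_le hi⟩ := rfl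
      have hs : (⟨i, hin⟩ : Fin n).succ = ⟨i + 1, Nat.lt_succ_of_le h⟩ := rfl
      rw [hc, hs] at hmove
      obtain ⟨hadj, hperm⟩ := hmove
      have hp := adj_parity hadj
      constructor
      · omega
      · rw [hperm, map_mul, ih2, Equiv.Perm.sign_swap (adj_pos_ne hadj), pow_succ]
        exact mul_comm _ _
  obtain ⟨k1, k2⟩ := key n le_rfl
  have hlast : (Fin.last n) = ⟨n, Nat.lt_succ_of_le le_rfl⟩ := rfl
  rw [hlast] at hret
  rw [hret] at k1
  have hev : Even n := Nat.even_iff.mpr (by omega)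
  refine ⟨hev, ?_⟩
  rw [hlast, k2, hev.neg_one_pow]
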